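/- arXiv:1603.08082 — 3 statements merged into one kernel-verified Lean document; each statement's English description precedes it below -/
import Mathlib

section
/- Let X be an infinite-dimensional Banach space, let U be a nonempty relatively weakly open subset of the closed unit ball B_X, and let a ∈ U with ‖a‖ < 1. Then a can be written as a = (1−μ)y + μz where μ ∈ [0,1] and y, z are points of U lying on the unit sphere S_X. -/
/-- `U` is a relatively weakly open subset of the closed unit ball of `X`:
it is contained in the ball and around each of its points it contains a basic
relatively weak neighbourhood determined by finitely many functionals. -/
def RelWeakOpen {X : Type*} [NormedAddCommGroup X] [NormedSpace ℝ X] (U : Set X) : Prop :=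
  U ⊆ Metric.closedBall 0 1 ∧
    ∀ a ∈ U, ∃ (m : ℕ) (f : Fin m → (X →L[ℝ] ℝ)) (δ : ℝ), 0 < δ ∧
      ∀ b ∈ Metric.closedBall (0 : X) 1, (∀ j, |f j b - f j a| < δ) → b ∈ U

theorem exists_ker_vec {X : Type*} [NormedAddCommGroup X] [NormedSpace ℝ X]
    (hX : ¬ FiniteDimensional ℝ X) (m : ℕ) (f : Fin m → (X →L[ℝ] ℝ)) :
    ∃ v : X, v ≠ 0 ∧ ∀ j, f j v = 0 := by
  by_contra h
  push_neg at h
  apply hX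
  have hinj : Function.Injective (LinearMap.pi fun j => (f j : X →ₗ[ℝ] ℝ)) := by
    rw [← LinearMap.ker_eq_bot, LinearMap.ker_eq_bot']
    intro v hv
    by_contra hv0
    obtain ⟨j, hj⟩ := h v hv0
    exact hj (congrFun hv j)
  exact FiniteDimensional.of_injective _ hinj

/-- In an infinite-dimensional Banach space, every point `a` of norm `< 1` of a
relatively weakly open subset `U` of the closed unit ball is a convex combination
`a = (1-μ)y + μz` of two points `y, z ∈ U` lying on the unit sphere. -/
theorem stmt0 {X : Type*} [NormedAddCommGroup X] [NormedSpace ℝ X] [CompleteSpace X]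
    (hX : ¬ FiniteDimensional ℝ X) (U : Set X) (hU : RelWeakOpen U)
    (a : X) (haU : a ∈ U) (ha : ‖a‖ < 1) :
    ∃ (μ : ℝ) (y z : X), μ ∈ Set.Icc (0 : ℝ) 1 ∧ y ∈ U ∧ z ∈ U ∧
      ‖y‖ = 1 ∧ ‖z‖ = 1 ∧ a = (1 - μ) • y + μ • z := by
  obtain ⟨hball, hnbhd⟩ := hU
  obtain ⟨m, f, δ, hδ, hmem⟩ := hnbhd a haU
  obtain ⟨v, hv0, hvker⟩ := exists_ker_vec hX m f
  have hvn : 0 < ‖v‖ := norm_pos_iff.mpr hv0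
  set g : ℝ → ℝ := fun t => ‖a + t • v‖ with hg
  have hgc : Continuous g := (continuous_const.add (continuous_id.smul continuous_const)).norm
  have hg0 : g 0 = ‖a‖ := by simp [hg]
  set T : ℝ := (1 + ‖a‖) / ‖v‖ with hT
  have hTpos : 0 < T := div_pos (by positivity) hvn
  have hbig : ∀ t : ℝ, |t| = T → 1 ≤ g t := by
    intro t ht
    have h1 : ‖t • v‖ = 1 + ‖a‖ := by
      rw [norm_smul, Real.norm_eq_abs, ht, hT, div_mul_cancel₀ _ (ne_of_gt hvn)]
    have h2 : ‖t • v‖ ≤ ‖a + t • v‖ + ‖a‖ := by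
      calc ‖t • v‖ = ‖(a + t • v) - a‖ := by rw [add_sub_cancel_left]
        _ ≤ ‖a + t • v‖ + ‖a‖ := norm_sub_le _ _
    rw [h1] at h2
    linarith [h2]
  -- positive side
  have hmemz : (1 : ℝ) ∈ Set.Icc (g 0) (g T) :=
    ⟨by rw [hg0]; exact le_of_lt ha, hbig T (abs_of_pos hTpos)⟩
  obtain ⟨t, htI, htg⟩ := intermediate_value_Icc (le_of_lt hTpos) hgc.continuousOn hmemz
  have ht0 : 0 < t := by
    rcases lt_or_eq_of_le htI.1 with h | h
    · exact h
    · exfalso; rw [← h] at htg; rw [hg0] at htg; linarith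
  -- negative side
  have hmemz' : (1 : ℝ) ∈ Set.Icc (g 0) (g (-T)) :=
    ⟨by rw [hg0]; exact le_of_lt ha, hbig (-T) (by rw [abs_neg, abs_of_pos hTpos])⟩
  obtain ⟨s, hsI, hsg⟩ := intermediate_value_Icc' (by linarith : -T ≤ (0:ℝ)) hgc.continuousOn hmemz'
  have hs0 : s < 0 := by
    rcases lt_or_eq_of_le hsI.2 with h | h
    · exact h
    · exfalso; rw [h] at hsg; rw [hg0] at hsg; linarith
  set y := a + s • v with hy
  set z := a + t • v with hz
  have hny : ‖y‖ = 1 := hsg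
  have hnz : ‖z‖ = 1 := htg
  have hyB : y ∈ Metric.closedBall (0 : X) 1 := by
    rw [Metric.mem_closedBall, dist_zero_right, hny]
  have hzB : z ∈ Metric.closedBall (0 : X) 1 := by
    rw [Metric.mem_closedBall, dist_zero_right, hnz]
  have hfy : ∀ j, |f j y - f j a| < δ := by
    intro j; simp [hy, map_add, hvker j, hδ]
  have hfz : ∀ j, |f j z - f j a| < δ := by
    intro j; simp [hz, map_add, hvker j, hδ]
  have hyU : y ∈ U := hmem y hyB hfy
  have hzU : z ∈ U := hmem z hzB hfz
  refine ⟨-s / (t - s), y, z, ⟨?_, ?_⟩, hyU, hzU, hny, hnz, ?_⟩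
  · apply div_nonneg <;> linarith
  · rw [div_le_one (by linarith)]; linarith
  · have hts : t - s ≠ 0 := ne_of_gt (by linarith)
    have hcoef : (1 - (-s / (t - s))) * s + (-s / (t - s)) * t = 0 := by
      field_simp; ring
    rw [hy, hz]
    have e : (1 - -s / (t - s)) • (a + s • v) + (-s / (t - s)) • (a + t • v)
        = ((1 - -s / (t - s)) + -s / (t - s)) • a
          + ((1 - -s / (t - s)) * s + -s / (t - s) * t) • v := by module
    rw [e, hcoef]
    simp
end

section
/- Let X and Y be Banach spaces and Z = X ⊕_1 Y their direct sum with the norm ‖(x,y)‖ = ‖x‖ + ‖y‖. Let z = (x₀, y₀) ∈ S_Z and let W be a relatively weakly open subset of B_Z containing z. Define x̂ = x₀/‖x₀‖ if x₀ ≠ 0 and x̂ = 0 otherwise, and ŷ similarly for y₀. Then there exist relatively weakly open subsets U ⊆ B_X containing x̂ and V ⊆ B_Y containing ŷ such that (‖x₀‖·U) × (‖y₀‖·V) ⊆ W. -/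
open Classical in
/-- `normalize x = x / ‖x‖` if `x ≠ 0`, and `0` otherwise. -/
noncomputable def unitize {X : Type*} [NormedAddCommGroup X] [NormedSpace ℝ X] (x : X) : X :=
  if x = 0 then 0 else ‖x‖⁻¹ • x

lemma norm_one_prod' {X Y : Type*} [NormedAddCommGroup X] [NormedAddCommGroup Y]
    (f : WithLp 1 (X × Y)) : ‖f‖ = ‖f.fst‖ + ‖f.snd‖ := by
  rw [WithLp.prod_norm_eq_add (by norm_num)]
  norm_num

lemma norm_unitize_le_one {X : Type*} [NormedAddCommGroup X] [NormedSpace ℝ X] (x : X) :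
    ‖unitize x‖ ≤ 1 := by
  unfold unitize
  split_ifs with h
  · simp
  · rw [norm_smul, norm_inv, norm_norm, inv_mul_cancel₀ (norm_ne_zero_iff.mpr h)]

lemma smul_unitize {X : Type*} [NormedAddCommGroup X] [NormedSpace ℝ X] (x : X) :
    ‖x‖ • unitize x = x := by
  unfold unitize
  split_ifs with h
  · simp [h]
  · rw [smul_smul, mul_inv_cancel₀ (norm_ne_zero_iff.mpr h), one_smul]

lemma relWeakOpen_slice {X : Type*} [NormedAddCommGroup X] [NormedSpace ℝ X]
    (m : ℕ) (g : Fin m → (X →L[ℝ] ℝ)) (c : X) (ε : ℝ) (hε : 0 < ε) :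
    RelWeakOpen {u : X | u ∈ Metric.closedBall (0 : X) 1 ∧ ∀ j, |g j u - g j c| < ε} := by
  constructor
  · intro u hu; exact hu.1
  · rintro a ⟨haB, haj⟩
    set S : NNReal := Finset.univ.sup (fun j => ⟨|g j a - g j c|, abs_nonneg _⟩) with hS
    have hSlt : (S : ℝ) < ε := by
      have : S < (⟨ε, hε.le⟩ : NNReal) := by
        apply Finset.sup_lt_iff (by exact_mod_cast hε) |>.mpr
        intro j _
        exact_mod_cast haj j
      exact_mod_cast this
    refine ⟨m, g, ε - S, by linarith, ?_⟩
    intro b hb hbj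
    refine ⟨hb, fun j => ?_⟩
    have h1 : |g j a - g j c| ≤ (S : ℝ) := by
      have := Finset.le_sup (f := fun j => (⟨|g j a - g j c|, abs_nonneg _⟩ : NNReal))
        (Finset.mem_univ j)
      exact_mod_cast this
    calc |g j b - g j c| ≤ |g j b - g j a| + |g j a - g j c| := abs_sub_le _ _ _
      _ < (ε - S) + S := add_lt_add_of_lt_of_le (hbj j) h1
      _ = ε := by ring

set_option maxHeartbeats 1000000 in
/-- If `z = (x₀, y₀)` is a unit vector of `Z = X ⊕₁ Y` and `W` is a relatively weakly
open subset of `B_Z` containing `z`, then there are relatively weakly open subsets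
`U ∋ x̂₀` of `B_X` and `V ∋ ŷ₀` of `B_Y` with `(‖x₀‖U) × (‖y₀‖V) ⊆ W`. -/
theorem stmt4 {X Y : Type*} [NormedAddCommGroup X] [NormedSpace ℝ X] [CompleteSpace X]
    [NormedAddCommGroup Y] [NormedSpace ℝ Y] [CompleteSpace Y]
    (x₀ : X) (y₀ : Y) (z : WithLp 1 (X × Y))
    (hz : z = (WithLp.equiv 1 (X × Y)).symm (x₀, y₀))
    (hzS : z ∈ Metric.sphere (0 : WithLp 1 (X × Y)) 1)
    (W : Set (WithLp 1 (X × Y))) (hW : RelWeakOpen W) (hzW : z ∈ W) :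
    ∃ (U : Set X) (V : Set Y), RelWeakOpen U ∧ RelWeakOpen V ∧
      unitize x₀ ∈ U ∧ unitize y₀ ∈ V ∧
      {w : WithLp 1 (X × Y) | ∃ u ∈ U, ∃ v ∈ V,
        w = (WithLp.equiv 1 (X × Y)).symm (‖x₀‖ • u, ‖y₀‖ • v)} ⊆ W := by
  obtain ⟨hWb, hWo⟩ := hW
  obtain ⟨m, f, δ, hδ, hf⟩ := hWo z hzW
  set Q := (WithLp.equiv 1 (X × Y)).symm with hQ
  set E := (WithLp.prodContinuousLinearEquiv 1 ℝ X Y).symm.toContinuousLinearMap with hE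
  set g : Fin m → (X →L[ℝ] ℝ) := fun j =>
    ((f j).comp E).comp ((‖x₀‖ : ℝ) • ContinuousLinearMap.inl ℝ X Y) with hg
  set h : Fin m → (Y →L[ℝ] ℝ) := fun j =>
    ((f j).comp E).comp ((‖y₀‖ : ℝ) • ContinuousLinearMap.inr ℝ X Y) with hh
  have hQnorm : ∀ (a : X) (b : Y), ‖Q (a, b)‖ = ‖a‖ + ‖b‖ := by
    intro a b
    rw [norm_one_prod']
    rfl
  have key : ∀ (j : Fin m) (u : X) (v : Y),
      f j (Q (‖x₀‖ • u, ‖y₀‖ • v)) = g j u + h j v := by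
    intro j u v
    have hadd : Q (‖x₀‖ • u, ‖y₀‖ • v) = Q (‖x₀‖ • u, 0) + Q (0, ‖y₀‖ • v) := by
      show WithLp.toLp 1 _ = WithLp.toLp 1 _ + WithLp.toLp 1 _
      rw [← WithLp.toLp_add]
      congr 1
      simp
    rw [hadd, map_add]
    simp only [hg, hh, ContinuousLinearMap.comp_apply, ContinuousLinearMap.smul_apply,
      ContinuousLinearMap.inl_apply, ContinuousLinearMap.inr_apply, Prod.smul_mk, smul_zero]
    rfl
  have hx : ‖x₀‖ • unitize x₀ = x₀ := smul_unitize x₀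
  have hy : ‖y₀‖ • unitize y₀ = y₀ := smul_unitize y₀
  have hfz : ∀ j, f j z = g j (unitize x₀) + h j (unitize y₀) := by
    intro j
    rw [← key j, hx, hy, ← hz]
  have hnorm1 : ‖x₀‖ + ‖y₀‖ = 1 := by
    have := mem_sphere_zero_iff_norm.mp hzS
    rw [hz] at this
    rw [← this, hQnorm]
  refine ⟨{u : X | u ∈ Metric.closedBall (0 : X) 1 ∧ ∀ j, |g j u - g j (unitize x₀)| < δ / 2},
    {v : Y | v ∈ Metric.closedBall (0 : Y) 1 ∧ ∀ j, |h j v - h j (unitize y₀)| < δ / 2},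
    relWeakOpen_slice m g (unitize x₀) (δ / 2) (by linarith),
    relWeakOpen_slice m h (unitize y₀) (δ / 2) (by linarith),
    ⟨mem_closedBall_zero_iff.mpr (norm_unitize_le_one x₀), fun j => by rw [sub_self, abs_zero]; exact half_pos hδ⟩,
    ⟨mem_closedBall_zero_iff.mpr (norm_unitize_le_one y₀), fun j => by rw [sub_self, abs_zero]; exact half_pos hδ⟩,
    ?_⟩
  rintro w ⟨u, ⟨huB, huj⟩, v, ⟨hvB, hvj⟩, rfl⟩
  apply hf
  · rw [mem_closedBall_zero_iff, hQnorm, norm_smul, norm_smul, norm_norm, norm_norm]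
    have hu1 : ‖u‖ ≤ 1 := mem_closedBall_zero_iff.mp huB
    have hv1 : ‖v‖ ≤ 1 := mem_closedBall_zero_iff.mp hvB
    nlinarith [norm_nonneg x₀, norm_nonneg y₀]
  · intro j
    rw [key j, hfz j]
    calc |g j u + h j v - (g j (unitize x₀) + h j (unitize y₀))|
        ≤ |g j u - g j (unitize x₀)| + |h j v - h j (unitize y₀)| := by
          have : g j u + h j v - (g j (unitize x₀) + h j (unitize y₀)) =
              (g j u - g j (unitize x₀)) + (h j v - h j (unitize y₀)) := by ring
          rw [this]; exact abs_add_le _ _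
      _ < δ / 2 + δ / 2 := add_lt_add (huj j) (hvj j)
      _ = δ := by ring
end

section
/- Let X and Y be Banach spaces each having the diametral strong diameter 2 property (DSD2P). Then the direct sum X ⊕_1 Y equipped with the norm ‖(x,y)‖ = ‖x‖ + ‖y‖ also has the DSD2P. -/
/-- The convex combination `∑ λᵢ Uᵢ` of sets, as a set. -/
def combo {X : Type*} [NormedAddCommGroup X] [NormedSpace ℝ X]
    {n : ℕ} (lam : Fin n → ℝ) (U : Fin n → Set X) : Set X :=
  {w : X | ∃ u : Fin n → X, (∀ i, u i ∈ U i) ∧ w = ∑ i, lam i • u i}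

/-- The diametral strong diameter 2 property. -/
def DSD2P (X : Type*) [NormedAddCommGroup X] [NormedSpace ℝ X] : Prop :=
  ∀ (n : ℕ) (U : Fin n → Set X), (∀ i, (U i).Nonempty) → (∀ i, RelWeakOpen (U i)) →
    ∀ lam : Fin n → ℝ, (∀ i, lam i ∈ Set.Icc (0 : ℝ) 1) → ∑ i, lam i = 1 →
    ∀ x ∈ combo lam U, ∀ ε > (0 : ℝ), ∃ u ∈ combo lam U, ‖x - u‖ ≥ ‖x‖ + 1 - ε

lemma relWeakOpen_aux {X : Type*} [NormedAddCommGroup X] [NormedSpace ℝ X]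
    {m : ℕ} (φ : Fin m → (X →L[ℝ] ℝ)) (r s : Fin m → ℝ) :
    RelWeakOpen {v : X | v ∈ Metric.closedBall (0:X) 1 ∧ ∀ j, |φ j v - r j| < s j} := by
  refine ⟨fun v hv => hv.1, fun a ha => ?_⟩
  rcases Nat.eq_zero_or_pos m with hm | hm
  · exact ⟨0, Fin.elim0, 1, one_pos,
      fun b hb _ => ⟨hb, fun j => absurd j.2 (by omega)⟩⟩
  · have hne : (Finset.univ : Finset (Fin m)).Nonempty := ⟨⟨0, hm⟩, Finset.mem_univ _⟩
    refine ⟨m, φ, Finset.univ.inf' hne (fun j => s j - |φ j a - r j|), ?_, ?_⟩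
    · exact (Finset.lt_inf'_iff hne).mpr (fun j _ => sub_pos.mpr (ha.2 j))
    · intro b hb hcl
      refine ⟨hb, fun j => ?_⟩
      have h1 : |φ j b - r j| ≤ |φ j b - φ j a| + |φ j a - r j| := abs_sub_le _ _ _
      have h2 : Finset.univ.inf' hne (fun j => s j - |φ j a - r j|) ≤ s j - |φ j a - r j| :=
        Finset.inf'_le _ (Finset.mem_univ j)
      have h3 := hcl j
      linarith

/-- The one-sided workhorse: inside a Banach space with the DSD2P, given points `a i`
with `‖a i‖ ≤ c i` and functional constraints, find `v i` in the unit ball satisfying the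
constraints for the rescaled points `c i • v i` and pushing the combination far away. -/
lemma dsd2p_side {Z : Type*} [NormedAddCommGroup Z] [NormedSpace ℝ Z] (hZ : DSD2P Z)
    {n : ℕ} (lam : Fin n → ℝ) (hlam : ∀ i, lam i ∈ Set.Icc (0:ℝ) 1) (hsum : ∑ i, lam i = 1)
    (c : Fin n → ℝ) (hc : ∀ i, 0 ≤ c i)
    (a : Fin n → Z) (hac : ∀ i, ‖a i‖ ≤ c i)
    (m : Fin n → ℕ) (g : ∀ i, Fin (m i) → (Z →L[ℝ] ℝ)) (δ : Fin n → ℝ) (hδ : ∀ i, 0 < δ i)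
    (ε : ℝ) (hε : 0 < ε) :
    ∃ v : Fin n → Z, (∀ i, ‖v i‖ ≤ 1) ∧
      (∀ i j, |g i j (c i • v i) - g i j (a i)| < δ i / 2) ∧
      (∑ i, lam i * c i) * (1 - ε) + ‖∑ i, lam i • a i‖ ≤
        ‖∑ i, lam i • a i - ∑ i, (lam i * c i) • v i‖ := by
  classical
  set γ := ∑ i, lam i * c i with hγ
  have hγ0 : 0 ≤ γ := Finset.sum_nonneg fun i _ => mul_nonneg (hlam i).1 (hc i)
  set p : Fin n → Z := fun i => (c i)⁻¹ • a i with hp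
  have hcp : ∀ i, c i • p i = a i := by
    intro i
    by_cases hci : c i = 0
    · have ha0 : a i = 0 := norm_le_zero_iff.mp (hci ▸ hac i)
      simp [hp, hci, ha0]
    · simp [hp, smul_smul, mul_inv_cancel₀ hci]
  have hpB : ∀ i, ‖p i‖ ≤ 1 := by
    intro i
    by_cases hci : c i = 0
    · have ha0 : a i = 0 := norm_le_zero_iff.mp (hci ▸ hac i)
      simp [hp, ha0]
    · have hcpos : 0 < c i := lt_of_le_of_ne (hc i) (Ne.symm hci)
      rw [hp]
      simp only [norm_smul, norm_inv, Real.norm_eq_abs, abs_of_pos hcpos]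
      rw [inv_mul_le_iff₀ hcpos, mul_one]
      exact hac i
  set V : Fin n → Set Z := fun i =>
    {v : Z | v ∈ Metric.closedBall (0:Z) 1 ∧ ∀ j, |(c i • g i j) v - g i j (a i)| < δ i / 2}
    with hV
  have hpV : ∀ i, p i ∈ V i := by
    intro i
    refine ⟨Metric.mem_closedBall.mpr (by simpa using hpB i), fun j => ?_⟩
    have : (c i • g i j) (p i) = g i j (c i • p i) := by
      simp [ContinuousLinearMap.smul_apply, map_smul]
    rw [this, hcp i, sub_self, abs_zero]
    exact half_pos (hδ i)
  have hVopen : ∀ i, RelWeakOpen (V i) := fun i => relWeakOpen_aux _ _ _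
  have hVne : ∀ i, (V i).Nonempty := fun i => ⟨p i, hpV i⟩
  set μ : Fin n → ℝ := fun i => if γ = 0 then lam i else lam i * c i / γ with hμ
  have hkey : ∀ i, lam i * c i = γ * μ i := by
    intro i
    by_cases hγ' : γ = 0
    · have : ∀ j ∈ Finset.univ, 0 ≤ lam j * c j :=
        fun j _ => mul_nonneg (hlam j).1 (hc j)
      have := (Finset.sum_eq_zero_iff_of_nonneg this).mp (hγ ▸ hγ') i (Finset.mem_univ i)
      simp [hγ', this]
    · simp [hμ, hγ', mul_div_cancel₀ _ hγ']
  have hμIcc : ∀ i, μ i ∈ Set.Icc (0:ℝ) 1 := by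
    intro i
    by_cases hγ' : γ = 0
    · simpa [hμ, hγ'] using hlam i
    · have hγpos : 0 < γ := lt_of_le_of_ne hγ0 (Ne.symm hγ')
      constructor
      · simp only [hμ, if_neg hγ']
        exact div_nonneg (mul_nonneg (hlam i).1 (hc i)) hγ0
      · simp only [hμ, if_neg hγ']
        rw [div_le_one hγpos]
        exact Finset.single_le_sum (f := fun j => lam j * c j)
          (fun j _ => mul_nonneg (hlam j).1 (hc j)) (Finset.mem_univ i)
  have hμsum : ∑ i, μ i = 1 := by
    by_cases hγ' : γ = 0
    · simpa [hμ, hγ'] using hsum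
    · simp only [hμ, if_neg hγ']
      rw [← Finset.sum_div, ← hγ, div_self hγ']
  have hpcombo : (∑ i, μ i • p i) ∈ combo μ V := ⟨p, hpV, rfl⟩
  obtain ⟨vb, ⟨v, hvV, rfl⟩, hdist⟩ :=
    hZ n V hVne hVopen μ hμIcc hμsum _ hpcombo ε hε
  have hgen : ∀ t : Fin n → Z, ∑ i, (lam i * c i) • t i = γ • ∑ i, μ i • t i := by
    intro t
    rw [Finset.smul_sum]
    exact Finset.sum_congr rfl fun i _ => by rw [smul_smul, hkey i]
  have hax : ∑ i, lam i • a i = γ • ∑ i, μ i • p i := by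
    rw [← hgen]
    exact Finset.sum_congr rfl fun i _ => by rw [← hcp i, smul_smul]
  refine ⟨v, fun i => by simpa using Metric.mem_closedBall.mp (hvV i).1, fun i j => ?_, ?_⟩
  · have : (c i • g i j) (v i) = g i j (c i • v i) := by
      simp [ContinuousLinearMap.smul_apply, map_smul]
    rw [← this]
    exact (hvV i).2 j
  · rw [hax, hgen, ← smul_sub, norm_smul, norm_smul,
      Real.norm_eq_abs, abs_of_nonneg hγ0]
    have := mul_le_mul_of_nonneg_left hdist hγ0
    nlinarith [norm_nonneg (∑ i, μ i • p i)]

section Prod1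

variable (X Y : Type*) [NormedAddCommGroup X] [NormedSpace ℝ X]
  [NormedAddCommGroup Y] [NormedSpace ℝ Y]

/-- The left inclusion into the 1-sum. -/
noncomputable def inL : X →L[ℝ] WithLp 1 (X × Y) :=
  ((WithLp.prodContinuousLinearEquiv 1 ℝ X Y).symm : (X × Y) →L[ℝ] WithLp 1 (X × Y)).comp
    (ContinuousLinearMap.inl ℝ X Y)

/-- The right inclusion into the 1-sum. -/
noncomputable def inR : Y →L[ℝ] WithLp 1 (X × Y) :=
  ((WithLp.prodContinuousLinearEquiv 1 ℝ X Y).symm : (X × Y) →L[ℝ] WithLp 1 (X × Y)).comp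
    (ContinuousLinearMap.inr ℝ X Y)

variable {X Y}

omit [NormedSpace ℝ X] [NormedSpace ℝ Y] in
lemma norm_one_eq (z : WithLp 1 (X × Y)) : ‖z‖ = ‖z.fst‖ + ‖z.snd‖ := by
  rw [WithLp.prod_norm_eq_add (by norm_num)]
  norm_num

lemma split_eq (z : WithLp 1 (X × Y)) : inL X Y z.fst + inR X Y z.snd = z := by
  refine (WithLp.equiv 1 (X × Y)).injective (Prod.ext ?_ ?_)
  · show z.fst + 0 = z.fst; exact add_zero _
  · show 0 + z.snd = z.snd; exact zero_add _

lemma split_apply (f : WithLp 1 (X × Y) →L[ℝ] ℝ) (z : WithLp 1 (X × Y)) :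
    f z = f (inL X Y z.fst) + f (inR X Y z.snd) := by
  rw [← map_add, split_eq]

omit [NormedSpace ℝ X] [NormedSpace ℝ Y] in
lemma fst_sum' {ι : Type*} (s : Finset ι) (g : ι → WithLp 1 (X × Y)) :
    (∑ i ∈ s, g i).fst = ∑ i ∈ s, (g i).fst := by
  simp only [WithLp.fst, WithLp.ofLp_sum, Prod.fst_sum]

omit [NormedSpace ℝ X] [NormedSpace ℝ Y] in
lemma snd_sum' {ι : Type*} (s : Finset ι) (g : ι → WithLp 1 (X × Y)) :
    (∑ i ∈ s, g i).snd = ∑ i ∈ s, (g i).snd := by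
  simp only [WithLp.snd, WithLp.ofLp_sum, Prod.snd_sum]

end Prod1

/-- The DSD2P is stable under 1-sums: if `X` and `Y` have the DSD2P, so does
`X ⊕₁ Y`, the product with the norm `‖(x,y)‖ = ‖x‖ + ‖y‖`. -/
theorem stmt6 (X Y : Type*) [NormedAddCommGroup X] [NormedSpace ℝ X] [CompleteSpace X]
    [NormedAddCommGroup Y] [NormedSpace ℝ Y] [CompleteSpace Y]
    (hX : DSD2P X) (hY : DSD2P Y) : DSD2P (WithLp 1 (X × Y)) := by
  classical
  intro n U hne hopen lam hlam hsum x hx ε hε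
  obtain ⟨u, hu, rfl⟩ := hx
  choose m f δ hδ hball using fun i => (hopen i).2 (u i) (hu i)
  have hub : ∀ i, ‖(u i).fst‖ + ‖(u i).snd‖ ≤ 1 := by
    intro i
    have h := (hopen i).1 (hu i)
    rw [Metric.mem_closedBall, dist_zero_right] at h
    rw [← norm_one_eq]
    exact h
  set c : Fin n → ℝ := fun i => 1 - ‖(u i).snd‖ with hc
  set d : Fin n → ℝ := fun i => ‖(u i).snd‖ with hd
  have hc0 : ∀ i, 0 ≤ c i := by
    intro i
    have h1 := hub i
    have h2 := norm_nonneg (u i).fst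
    simp only [hc]
    linarith
  have hd0 : ∀ i, 0 ≤ d i := fun i => norm_nonneg _
  have hacX : ∀ i, ‖(u i).fst‖ ≤ c i := by
    intro i
    have h1 := hub i
    simp only [hc]
    linarith
  have hacY : ∀ i, ‖(u i).snd‖ ≤ d i := fun i => le_refl _
  obtain ⟨v, hvB, hvf, hvdist⟩ := dsd2p_side hX lam hlam hsum c hc0 (fun i => (u i).fst) hacX m
      (fun i j => (f i j).comp (inL X Y)) δ hδ ε hε
  obtain ⟨w, hwB, hwf, hwdist⟩ := dsd2p_side hY lam hlam hsum d hd0 (fun i => (u i).snd) hacY m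
      (fun i j => (f i j).comp (inR X Y)) δ hδ ε hε
  set z : Fin n → WithLp 1 (X × Y) :=
    fun i => inL X Y (c i • v i) + inR X Y (d i • w i) with hz
  have hzfst : ∀ i, (z i).fst = c i • v i := by
    intro i; show c i • v i + 0 = c i • v i; exact add_zero _
  have hzsnd : ∀ i, (z i).snd = d i • w i := by
    intro i; show 0 + d i • w i = d i • w i; exact zero_add _
  have hcd1 : ∀ i, c i + d i = 1 := by
    intro i; simp only [hc, hd]; ring
  have hzU : ∀ i, z i ∈ U i := by
    intro i
    apply hball i
    · rw [Metric.mem_closedBall, dist_zero_right, norm_one_eq, hzfst, hzsnd]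
      have h1 : ‖c i • v i‖ ≤ c i := by
        rw [norm_smul, Real.norm_eq_abs, abs_of_nonneg (hc0 i)]
        nlinarith [hvB i, hc0 i]
      have h2 : ‖d i • w i‖ ≤ d i := by
        rw [norm_smul, Real.norm_eq_abs, abs_of_nonneg (hd0 i)]
        nlinarith [hwB i, hd0 i]
      have h3 := hcd1 i
      linarith
    · intro j
      rw [split_apply (f i j) (z i), split_apply (f i j) (u i), hzfst, hzsnd]
      have h1 := hvf i j
      have h2 := hwf i j
      simp only [ContinuousLinearMap.comp_apply] at h1 h2
      have heq : f i j (inL X Y (c i • v i)) + f i j (inR X Y (d i • w i)) -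
          (f i j (inL X Y (u i).fst) + f i j (inR X Y (u i).snd)) =
          (f i j (inL X Y (c i • v i)) - f i j (inL X Y (u i).fst)) +
          (f i j (inR X Y (d i • w i)) - f i j (inR X Y (u i).snd)) := by ring
      rw [heq]
      calc |(f i j (inL X Y (c i • v i)) - f i j (inL X Y (u i).fst)) +
          (f i j (inR X Y (d i • w i)) - f i j (inR X Y (u i).snd))|
          ≤ |f i j (inL X Y (c i • v i)) - f i j (inL X Y (u i).fst)| +
            |f i j (inR X Y (d i • w i)) - f i j (inR X Y (u i).snd)| := abs_add_le _ _
        _ < δ i / 2 + δ i / 2 := add_lt_add h1 h2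
        _ = δ i := by ring
  refine ⟨∑ i, lam i • z i, ⟨z, hzU, rfl⟩, ?_⟩
  have hfst : (∑ i, lam i • u i - ∑ i, lam i • z i).fst
      = ∑ i, lam i • (u i).fst - ∑ i, (lam i * c i) • v i := by
    have e1 : (∑ i, lam i • u i - ∑ i, lam i • z i).fst
        = (∑ i, lam i • u i).fst - (∑ i, lam i • z i).fst := rfl
    rw [e1, fst_sum', fst_sum']
    have h1 : ∑ i, (lam i • u i).fst = ∑ i, lam i • (u i).fst :=
      Finset.sum_congr rfl fun i _ => rfl
    have h2 : ∑ i, (lam i • z i).fst = ∑ i, (lam i * c i) • v i :=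
      Finset.sum_congr rfl fun i _ => by
        rw [show (lam i • z i).fst = lam i • (z i).fst from rfl, hzfst i, smul_smul]
    rw [h1, h2]
  have hsnd : (∑ i, lam i • u i - ∑ i, lam i • z i).snd
      = ∑ i, lam i • (u i).snd - ∑ i, (lam i * d i) • w i := by
    have e1 : (∑ i, lam i • u i - ∑ i, lam i • z i).snd
        = (∑ i, lam i • u i).snd - (∑ i, lam i • z i).snd := rfl
    rw [e1, snd_sum', snd_sum']
    have h1 : ∑ i, (lam i • u i).snd = ∑ i, lam i • (u i).snd :=
      Finset.sum_congr rfl fun i _ => rfl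
    have h2 : ∑ i, (lam i • z i).snd = ∑ i, (lam i * d i) • w i :=
      Finset.sum_congr rfl fun i _ => by
        rw [show (lam i • z i).snd = lam i • (z i).snd from rfl, hzsnd i, smul_smul]
    rw [h1, h2]
  have hxfst : (∑ i, lam i • u i).fst = ∑ i, lam i • (u i).fst := by
    rw [fst_sum']
    exact Finset.sum_congr rfl fun i _ => rfl
  have hxsnd : (∑ i, lam i • u i).snd = ∑ i, lam i • (u i).snd := by
    rw [snd_sum']
    exact Finset.sum_congr rfl fun i _ => rfl
  have hγsum : (∑ i, lam i * c i) + (∑ i, lam i * d i) = 1 := by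
    rw [← Finset.sum_add_distrib, ← hsum]
    refine Finset.sum_congr rfl fun i _ => ?_
    calc lam i * c i + lam i * d i = lam i * (c i + d i) := by ring
      _ = lam i := by rw [hcd1 i, mul_one]
  have hmul : (∑ i, lam i * c i) * (1 - ε) + (∑ i, lam i * d i) * (1 - ε) = 1 - ε := by
    rw [← add_mul, hγsum, one_mul]
  rw [ge_iff_le, norm_one_eq (∑ i, lam i • u i - ∑ i, lam i • z i), hfst, hsnd,
    norm_one_eq (∑ i, lam i • u i), hxfst, hxsnd]
  linarith
end
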